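/- The map h : ω → ω sending 2^r + s ↦ ⟨2^r, s⟩ for s < 2^r (where ⟨a, b⟩ denotes the b-th element of the interval I_a of the fixed partition of ω into consecutive intervals with |I_a| = a) witnesses a Katětov reduction ED_fin ≤_K Sum_{1/n}: for every A ∈ ED_fin, the preimage h⁻¹[A] satisfies Σ_{n ∈ h⁻¹[A]} 1/n < ∞. -/

import Mathlib

def intStart (a : ℕ) : ℕ := Finset.sum (Finset.range a) id

def interval (a : ℕ) : Set ℕ := Set.Ico (intStart a) (intStart a + a)

def EDfin : Set (Set ℕ) :=
  {A | ∃ m N : ℕ, ∀ n : ℕ, N ≤ n → (A ∩ interval n).ncard ≤ m}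

def hmap (n : ℕ) : ℕ := intStart (2 ^ Nat.log 2 n) + (n - 2 ^ Nat.log 2 n)

lemma hmap_spec (r s : ℕ) (hs : s < 2 ^ r) : hmap (2 ^ r + s) = intStart (2 ^ r) + s := by
  have hlog : Nat.log 2 (2 ^ r + s) = r :=
    Nat.log_eq_of_pow_le_of_lt_pow (Nat.le_add_right _ _) (by rw [pow_succ]; omega)
  simp [hmap, hlog]

lemma hmap_eq_of_mem (r n : ℕ) (h1 : 2 ^ r ≤ n) (h2 : n < 2 ^ (r + 1)) :
    hmap n = intStart (2 ^ r) + (n - 2 ^ r) := by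
  have : n = 2 ^ r + (n - 2 ^ r) := by omega
  rw [this, hmap_spec]
  · omega
  · rw [pow_succ] at h2; omega

theorem stmt15 :
    ∃ h : ℕ → ℕ,
      (∀ r s : ℕ, s < 2 ^ r → h (2 ^ r + s) = intStart (2 ^ r) + s) ∧
      ∀ A ∈ EDfin,
        Summable (Set.indicator (h ⁻¹' A) fun n : ℕ => (1 : ℝ) / n) := by
  classical
  refine ⟨hmap, hmap_spec, ?_⟩
  rintro A ⟨m, N, hA⟩
  set f : ℕ → ℝ := Set.indicator (hmap ⁻¹' A) (fun n : ℕ => (1 : ℝ) / n) with hfdef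
  have hf0 : ∀ n, 0 ≤ f n := by
    intro n
    apply Set.indicator_nonneg
    intro x _
    positivity
  have hfle1 : ∀ n, f n ≤ 1 := by
    intro n
    by_cases hn : n ∈ hmap ⁻¹' A
    · rw [hfdef, Set.indicator_of_mem hn]
      rcases Nat.eq_zero_or_pos n with h | h
      · simp [h]
      · rw [div_le_one (by positivity)]
        exact_mod_cast h
    · rw [hfdef, Set.indicator_of_notMem hn]; norm_num
  set R := N with hRdef
  have hNR : N ≤ 2 ^ R := (Nat.lt_two_pow_self (n := N)).le
  -- block bound
  have block : ∀ r, R ≤ r →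
      ∑ n ∈ Finset.Ico (2 ^ r) (2 ^ (r + 1)), f n ≤ (m : ℝ) * (1 / 2) ^ r := by
    intro r hr
    set S := (Finset.Ico (2 ^ r) (2 ^ (r + 1))).filter (fun n => n ∈ hmap ⁻¹' A) with hS
    have hsum : ∑ n ∈ Finset.Ico (2 ^ r) (2 ^ (r + 1)), f n = ∑ n ∈ S, f n := by
      rw [hS]
      refine (Finset.sum_filter_of_ne ?_).symm
      intro x _ hx
      by_contra hmem
      exact hx (Set.indicator_of_notMem hmem _)
    have hcard : S.card ≤ m := by
      have hinj : Set.InjOn hmap ↑S := by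
        intro a ha b hb hab
        simp only [hS, Finset.coe_filter, Set.mem_setOf_eq, Finset.mem_Ico] at ha hb
        rw [hmap_eq_of_mem r a ha.1.1 ha.1.2, hmap_eq_of_mem r b hb.1.1 hb.1.2] at hab
        omega
      have himg : (S.image hmap : Set ℕ) ⊆ A ∩ interval (2 ^ r) := by
        intro y hy
        simp only [Finset.coe_image, Set.mem_image, Finset.mem_coe] at hy
        obtain ⟨n, hn, rfl⟩ := hy
        simp only [hS, Finset.mem_filter, Finset.mem_Ico, Set.mem_preimage] at hn
        obtain ⟨⟨hn1, hn2⟩, hnA⟩ := hn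
        refine ⟨hnA, ?_⟩
        rw [hmap_eq_of_mem r _ hn1 hn2]
        constructor
        · omega
        · rw [pow_succ] at hn2; omega
      have h1 : (S.image hmap).card = S.card :=
        Finset.card_image_of_injOn (by simpa using hinj)
      have h2 : ((S.image hmap : Set ℕ)).ncard ≤ (A ∩ interval (2 ^ r)).ncard :=
        Set.ncard_le_ncard himg ((Set.finite_Ico _ _).inter_of_right _)
      rw [Set.ncard_coe_finset, h1] at h2
      exact h2.trans (hA _ (hNR.trans (Nat.pow_le_pow_right (by norm_num) hr)))
    have hterm : ∀ n ∈ S, f n ≤ (1 / 2 : ℝ) ^ r := by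
      intro n hn
      simp only [hS, Finset.mem_filter, Finset.mem_Ico] at hn
      have h1 : n ∈ hmap ⁻¹' A := hn.2
      rw [hfdef, Set.indicator_of_mem h1]
      have hn1 : (2 : ℝ) ^ r ≤ (n : ℝ) := by exact_mod_cast hn.1.1
      rw [div_pow, one_pow]
      exact one_div_le_one_div_of_le (by positivity) hn1
    calc ∑ n ∈ Finset.Ico (2 ^ r) (2 ^ (r + 1)), f n = ∑ n ∈ S, f n := hsum
      _ ≤ S.card • (1 / 2 : ℝ) ^ r := Finset.sum_le_card_nsmul _ _ _ hterm
      _ = (S.card : ℝ) * (1 / 2) ^ r := by simp [nsmul_eq_mul]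
      _ ≤ (m : ℝ) * (1 / 2) ^ r := by
          apply mul_le_mul_of_nonneg_right _ (by positivity)
          exact_mod_cast hcard
  -- partial sums over dyadic ranges
  have total : ∀ T, ∑ n ∈ Finset.range (2 ^ (R + T)), f n ≤
      (2 : ℝ) ^ R + (m : ℝ) * ∑ r ∈ Finset.Ico R (R + T), (1 / 2 : ℝ) ^ r := by
    intro T
    induction T with
    | zero =>
      simp only [Nat.add_zero, Finset.Ico_self, Finset.sum_empty, mul_zero, add_zero]
      calc ∑ n ∈ Finset.range (2 ^ R), f n ≤ ∑ _n ∈ Finset.range (2 ^ R), (1 : ℝ) :=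
            Finset.sum_le_sum fun n _ => hfle1 n
        _ = (2 : ℝ) ^ R := by simp
    | succ T ih =>
      have hsplit : ∑ n ∈ Finset.range (2 ^ (R + (T + 1))), f n =
          ∑ n ∈ Finset.range (2 ^ (R + T)), f n +
          ∑ n ∈ Finset.Ico (2 ^ (R + T)) (2 ^ (R + T + 1)), f n := by
        rw [Finset.range_eq_Ico, Finset.range_eq_Ico, show R + (T + 1) = R + T + 1 from rfl]
        exact (Finset.sum_Ico_consecutive f (Nat.zero_le _)
          (Nat.pow_le_pow_right (n := 2) (by norm_num) (by omega))).symm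
      rw [hsplit, show R + (T + 1) = R + T + 1 from rfl,
        Finset.sum_Ico_succ_top (by omega), mul_add]
      have hb := block (R + T) (by omega)
      linarith [hb, ih]
  have geo : ∀ T, (m : ℝ) * ∑ r ∈ Finset.Ico R (R + T), (1 / 2 : ℝ) ^ r ≤ 2 * m := by
    intro T
    have h1 : ∑ r ∈ Finset.Ico R (R + T), (1 / 2 : ℝ) ^ r ≤
        ∑ r ∈ Finset.range (R + T), (1 / 2 : ℝ) ^ r := by
      apply Finset.sum_le_sum_of_subset_of_nonneg
      · rw [Finset.range_eq_Ico]; exact Finset.Ico_subset_Ico (Nat.zero_le _) le_rfl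
      · intro i _ _; positivity
    have h2 : ∑ r ∈ Finset.range (R + T), (1 / 2 : ℝ) ^ r ≤ 2 := by
      simpa [one_div] using sum_geometric_two_le (R + T)
    nlinarith [h1.trans h2, Nat.cast_nonneg (α := ℝ) m]
  apply summable_of_sum_range_le hf0 (c := (2 : ℝ) ^ R + 2 * m)
  intro K
  have hK : K ≤ 2 ^ (R + K) := (Nat.lt_two_pow_self (n := K)).le.trans
    (Nat.pow_le_pow_right (by norm_num) (by omega))
  have hmono : ∑ n ∈ Finset.range K, f n ≤ ∑ n ∈ Finset.range (2 ^ (R + K)), f n :=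
    Finset.sum_le_sum_of_subset_of_nonneg (Finset.range_subset_range.mpr hK)
      (fun i _ _ => hf0 i)
  calc ∑ n ∈ Finset.range K, f n ≤ ∑ n ∈ Finset.range (2 ^ (R + K)), f n := hmono
    _ ≤ (2 : ℝ) ^ R + (m : ℝ) * ∑ r ∈ Finset.Ico R (R + K), (1 / 2 : ℝ) ^ r := total K
    _ ≤ (2 : ℝ) ^ R + 2 * m := by linarith [geo K]
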